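/- For three binary random variables X₁, X₂, X₃ with joint distribution P, the 3-mutual information I₃ = H(X₁)+H(X₂)+H(X₃) − H(X₁,X₂) − H(X₁,X₃) − H(X₂,X₃) + H(X₁,X₂,X₃) satisfies I₃ ≥ −1, i.e., I₃ ≥ −min(H(X₁),H(X₂),H(X₃)) ≥ −1. -/

import Mathlib

open Finset Real

/-- Marginal of `p` on the coordinates in `T`, evaluated at (the restriction of)
a full configuration `x`. -/
noncomputable def marg {n : ℕ} {α : Fin n → Type*} [∀ i, Fintype (α i)]
    [∀ i, DecidableEq (α i)] (p : (∀ i, α i) → ℝ) (T : Finset (Fin n))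
    (x : ∀ i, α i) : ℝ :=
  ∑ y : ∀ i, α i, if ∀ i ∈ T, y i = x i then p y else 0

/-- Joint Shannon entropy (logarithm base `b`) of the coordinates in `T`
under the distribution `p`. -/
noncomputable def margEnt {n : ℕ} {α : Fin n → Type*} [∀ i, Fintype (α i)]
    [∀ i, DecidableEq (α i)] (b : ℝ) (p : (∀ i, α i) → ℝ)
    (T : Finset (Fin n)) : ℝ :=
  -∑ x : (∀ i : T, α i),
      (∑ y : ∀ i, α i, if ∀ i : T, y i = x i then p y else 0) *
        Real.logb b (∑ y : ∀ i, α i, if ∀ i : T, y i = x i then p y else 0)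

/-- Multivariate mutual information (co-information) of the coordinates in `S`,
defined by the alternating sum of joint entropies (inclusion–exclusion). -/
noncomputable def Imul {n : ℕ} {α : Fin n → Type*} [∀ i, Fintype (α i)]
    [∀ i, DecidableEq (α i)] (b : ℝ) (p : (∀ i, α i) → ℝ)
    (S : Finset (Fin n)) : ℝ :=
  ∑ T ∈ S.powerset.erase ∅, (-1 : ℝ) ^ (T.card + 1) * margEnt b p T


section aux
variable {n : ℕ} {α : Fin n → Type*} [∀ i, Fintype (α i)] [∀ i, DecidableEq (α i)]
variable (p : (∀ i, α i) → ℝ)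

/-- marginal in "partial configuration" form -/
noncomputable def mrgx (T : Finset (Fin n)) (x : ∀ i : T, α i) : ℝ :=
  ∑ y : ∀ i, α i, if ∀ i : T, y i = x i then p y else 0

def resx (T : Finset (Fin n)) (y : ∀ i, α i) : ∀ i : T, α i := fun i => y i

def resx2 {T U : Finset (Fin n)} (h : T ⊆ U) (x : ∀ i : U, α i) : ∀ i : T, α i :=
  fun i => x ⟨i.1, h i.2⟩

lemma mrgx_star (T : Finset (Fin n)) (h : (∀ i : T, α i) → ℝ) :
    ∑ x : ∀ i : T, α i, mrgx p T x * h x = ∑ y, p y * h (resx T y) := by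
  simp only [mrgx, Finset.sum_mul, ite_mul, zero_mul]
  rw [Finset.sum_comm]
  refine Finset.sum_congr rfl fun y _ => ?_
  have hiff : ∀ x : ∀ i : T, α i, (∀ i : T, y i = x i) ↔ resx T y = x := by
    intro x
    constructor
    · intro hx; funext i; exact hx i
    · intro hx i; rw [← hx]; rfl
  simp only [hiff]
  rw [Finset.sum_ite_eq]
  simp

lemma marg_eq_mrgx (T : Finset (Fin n)) (y : ∀ i, α i) :
    marg p T y = mrgx p T (resx T y) := by
  unfold marg mrgx
  refine Finset.sum_congr rfl fun z _ => if_congr ?_ rfl rfl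
  simp [resx, Subtype.forall, eq_comm]

lemma margEnt_eq (b : ℝ) (T : Finset (Fin n)) :
    margEnt b p T = -∑ y, p y * Real.logb b (marg p T y) := by
  have := mrgx_star p T (fun x => Real.logb b (mrgx p T x))
  unfold margEnt
  rw [show (∑ x : ∀ i : T, α i,
      (∑ y : ∀ i, α i, if ∀ i : T, y i = x i then p y else 0) *
        Real.logb b (∑ y : ∀ i, α i, if ∀ i : T, y i = x i then p y else 0))
      = ∑ x : ∀ i : T, α i, mrgx p T x * Real.logb b (mrgx p T x) from rfl, this]
  congr 1
  exact Finset.sum_congr rfl fun y _ => by rw [marg_eq_mrgx]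

variable (hp : ∀ x, 0 ≤ p x)
include hp

lemma mrgx_nonneg (T : Finset (Fin n)) (x : ∀ i : T, α i) : 0 ≤ mrgx p T x := by
  refine Finset.sum_nonneg fun y _ => ?_
  split <;> simp [hp y]

lemma le_marg (T : Finset (Fin n)) (y : ∀ i, α i) : p y ≤ marg p T y := by
  rw [marg_eq_mrgx]
  have : p y = if ∀ i : T, y i = resx T y i then p y else 0 := by simp [resx]
  rw [this]
  exact Finset.single_le_sum (f := fun z => if ∀ i : T, z i = resx T y i then p z else 0)
    (fun z _ => by split <;> simp [hp z]) (Finset.mem_univ y)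

lemma marg_anti {T U : Finset (Fin n)} (hTU : T ⊆ U) (y : ∀ i, α i) :
    marg p U y ≤ marg p T y := by
  unfold marg
  refine Finset.sum_le_sum fun z _ => ?_
  split_ifs with h1 h2
  · exact le_refl _
  · exact absurd (fun i hi => h1 i (hTU hi)) h2
  · exact hp z
  · exact le_refl _

lemma margEnt_mono {T U : Finset (Fin n)} (hTU : T ⊆ U) :
    margEnt 2 p T ≤ margEnt 2 p U := by
  rw [margEnt_eq, margEnt_eq, neg_le_neg_iff]
  refine Finset.sum_le_sum fun y _ => ?_
  rcases eq_or_lt_of_le (hp y) with h | h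
  · simp [← h]
  · refine mul_le_mul_of_nonneg_left ?_ (hp y)
    refine Real.logb_le_logb_of_le (by norm_num) ?_ (marg_anti p hp hTU y)
    exact lt_of_lt_of_le h (le_marg p hp U y)

omit hp in
lemma sum_mrgx (T : Finset (Fin n)) : ∑ x : ∀ i : T, α i, mrgx p T x = ∑ y, p y := by
  have := mrgx_star p T (fun _ => 1)
  simpa using this

/-- unique gluing of configurations on disjoint sets -/
def glue {T U : Finset (Fin n)} (y z : ∀ i, α i) :
    ∀ i : (T ∪ U : Finset (Fin n)), α i :=
  fun i => if i.1 ∈ T then y i.1 else z i.1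

omit hp in
lemma mrgx_prod_sum {T U : Finset (Fin n)} (hd : Disjoint T U) :
    ∑ x : ∀ i : (T ∪ U : Finset (Fin n)), α i,
      mrgx p T (resx2 Finset.subset_union_left x) *
        mrgx p U (resx2 Finset.subset_union_right x)
      = (∑ y, p y) * (∑ y, p y) := by
  rw [Finset.sum_mul_sum]
  simp only [mrgx, Finset.sum_mul_sum, ite_mul, zero_mul, mul_ite, mul_zero, ← ite_and]
  rw [Finset.sum_comm]
  refine Finset.sum_congr rfl fun y _ => ?_
  rw [Finset.sum_comm]
  refine Finset.sum_congr rfl fun z _ => ?_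
  have hiff : ∀ x : ∀ i : (T ∪ U : Finset (Fin n)), α i,
      ((∀ i : U, z i = resx2 Finset.subset_union_right x i) ∧
       (∀ i : T, y i = resx2 Finset.subset_union_left x i)) ↔ x = glue (T := T) (U := U) y z := by
    intro x
    constructor
    · rintro ⟨h2, h1⟩
      funext i
      rcases Finset.mem_union.1 i.2 with hi | hi
      · have := h1 ⟨i.1, hi⟩
        simp only [resx2] at this
        rw [glue, if_pos hi, ← this]
      · have hiT : i.1 ∉ T := Finset.disjoint_right.1 hd hi
        have := h2 ⟨i.1, hi⟩
        simp only [resx2] at this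
        rw [glue, if_neg hiT, ← this]
    · rintro rfl
      constructor
      · intro i
        simp [resx2, glue, Finset.disjoint_right.1 hd i.2]
      · intro i; simp [resx2, glue, i.2]
  simp only [hiff]
  rw [Finset.sum_ite_eq']
  simp

lemma sum_div_marg_le (T : Finset (Fin n)) :
    ∑ y, p y * (marg p T y)⁻¹ ≤ (Fintype.card (∀ i : T, α i) : ℝ) := by
  have hstar := mrgx_star p T (fun x => (mrgx p T x)⁻¹)
  have : ∑ y, p y * (marg p T y)⁻¹ = ∑ y, p y * (mrgx p T (resx T y))⁻¹ :=
    Finset.sum_congr rfl fun y _ => by rw [marg_eq_mrgx]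
  rw [this, ← hstar]
  calc ∑ x : ∀ i : T, α i, mrgx p T x * (mrgx p T x)⁻¹
      ≤ ∑ _x : ∀ i : T, α i, (1 : ℝ) := by
        refine Finset.sum_le_sum fun x _ => ?_
        rcases eq_or_ne (mrgx p T x) 0 with h | h
        · simp [h]
        · rw [mul_inv_cancel₀ h]
    _ = (Fintype.card (∀ i : T, α i) : ℝ) := by
        rw [Finset.sum_const, Finset.card_univ, nsmul_eq_mul, mul_one]

lemma margEnt_le_logb_card (hsum : ∑ y, p y = 1) (T : Finset (Fin n)) :
    margEnt 2 p T ≤ Real.logb 2 (Fintype.card (∀ i : T, α i)) := by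
  have hne : Nonempty (∀ i, α i) := by
    by_contra h
    have : IsEmpty (∀ i, α i) := not_nonempty_iff.mp h
    rw [Finset.univ_eq_empty, Finset.sum_empty] at hsum
    exact one_ne_zero hsum.symm
  have hcfg : Nonempty (∀ i : T, α i) := ⟨fun i => hne.some i⟩
  set N : ℝ := (Fintype.card (∀ i : T, α i) : ℝ) with hN
  have hNpos : 0 < N := by
    rw [hN]
    exact_mod_cast Fintype.card_pos
  have hL : (0 : ℝ) < Real.log 2 := Real.log_pos (by norm_num)
  rw [margEnt_eq]
  -- reduce logb to log
  have hkey : -∑ y, p y * Real.log (marg p T y) ≤ Real.log N := by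
    have hterm : ∀ y, p y * (-Real.log (marg p T y) - Real.log N)
        ≤ p y * (marg p T y)⁻¹ * N⁻¹ - p y := by
      intro y
      rcases eq_or_lt_of_le (hp y) with h | h
      · simp [← h]
      · have hm : 0 < marg p T y := lt_of_lt_of_le h (le_marg p hp T y)
        have hpos : 0 < (marg p T y * N)⁻¹ := by positivity
        have hlog : Real.log ((marg p T y * N)⁻¹) ≤ (marg p T y * N)⁻¹ - 1 :=
          Real.log_le_sub_one_of_pos hpos
        rw [Real.log_inv, Real.log_mul (ne_of_gt hm) (ne_of_gt hNpos)] at hlog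
        have := mul_le_mul_of_nonneg_left hlog (hp y)
        calc p y * (-Real.log (marg p T y) - Real.log N)
            = p y * (-(Real.log (marg p T y) + Real.log N)) := by ring
          _ ≤ p y * ((marg p T y * N)⁻¹ - 1) := this
          _ = p y * (marg p T y)⁻¹ * N⁻¹ - p y := by
              rw [mul_inv]; ring
    have hsum2 : ∑ y, p y * (-Real.log (marg p T y) - Real.log N)
        ≤ ∑ y, (p y * (marg p T y)⁻¹ * N⁻¹ - p y) :=
      Finset.sum_le_sum fun y _ => hterm y
    have hrhs : ∑ y, (p y * (marg p T y)⁻¹ * N⁻¹ - p y)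
        = (∑ y, p y * (marg p T y)⁻¹) * N⁻¹ - 1 := by
      rw [Finset.sum_sub_distrib, ← Finset.sum_mul, hsum]
    have hrhs2 : (∑ y, p y * (marg p T y)⁻¹) * N⁻¹ - 1 ≤ 0 := by
      have := mul_le_mul_of_nonneg_right (sum_div_marg_le p hp T) (inv_nonneg.2 (le_of_lt hNpos))
      rw [mul_inv_cancel₀ (ne_of_gt hNpos)] at this
      linarith
    have hlhs : ∑ y, p y * (-Real.log (marg p T y) - Real.log N)
        = -(∑ y, p y * Real.log (marg p T y)) - Real.log N := by
      simp only [mul_sub, mul_neg]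
      rw [Finset.sum_sub_distrib, Finset.sum_neg_distrib, ← Finset.sum_mul, hsum, one_mul]
    linarith [hsum2, hrhs, hrhs2, hlhs]
  have hconv : ∑ y, p y * Real.logb 2 (marg p T y)
      = (∑ y, p y * Real.log (marg p T y)) / Real.log 2 := by
    rw [Finset.sum_div]
    exact Finset.sum_congr rfl fun y _ => by rw [Real.logb, mul_div_assoc]
  rw [hconv, Real.logb, ← neg_div]
  exact (div_le_div_iff_of_pos_right hL).mpr hkey

lemma margEnt_union_le (hsum : ∑ y, p y = 1) {T U : Finset (Fin n)} (hd : Disjoint T U) :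
    margEnt 2 p (T ∪ U) ≤ margEnt 2 p T + margEnt 2 p U := by
  have hL : (0 : ℝ) < Real.log 2 := Real.log_pos (by norm_num)
  set mT := fun y => marg p T y with hmT
  set mU := fun y => marg p U y with hmU
  set mW := fun y => marg p (T ∪ U) y with hmW
  -- the key sum bound
  have hprod : ∑ y, p y * (mT y * mU y * (mW y)⁻¹) ≤ 1 := by
    have hstar := mrgx_star p (T ∪ U) (fun x =>
      mrgx p T (resx2 Finset.subset_union_left x) *
        mrgx p U (resx2 Finset.subset_union_right x) * (mrgx p (T ∪ U) x)⁻¹)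
    have heq : ∑ y, p y * (mT y * mU y * (mW y)⁻¹)
        = ∑ x : ∀ i : (T ∪ U : Finset (Fin n)), α i, mrgx p (T ∪ U) x *
            (mrgx p T (resx2 Finset.subset_union_left x) *
              mrgx p U (resx2 Finset.subset_union_right x) * (mrgx p (T ∪ U) x)⁻¹) := by
      rw [hstar]
      refine Finset.sum_congr rfl fun y _ => ?_
      simp only [hmT, hmU, hmW, marg_eq_mrgx]
      rfl
    rw [heq]
    calc ∑ x : ∀ i : (T ∪ U : Finset (Fin n)), α i, mrgx p (T ∪ U) x *
            (mrgx p T (resx2 Finset.subset_union_left x) *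
              mrgx p U (resx2 Finset.subset_union_right x) * (mrgx p (T ∪ U) x)⁻¹)
        ≤ ∑ x : ∀ i : (T ∪ U : Finset (Fin n)), α i,
            mrgx p T (resx2 Finset.subset_union_left x) *
              mrgx p U (resx2 Finset.subset_union_right x) := by
          refine Finset.sum_le_sum fun x _ => ?_
          rcases eq_or_ne (mrgx p (T ∪ U) x) 0 with h | h
          · rw [h, zero_mul]
            exact mul_nonneg (mrgx_nonneg p hp T _) (mrgx_nonneg p hp U _)
          · rw [show mrgx p (T ∪ U) x *
                (mrgx p T (resx2 Finset.subset_union_left x) *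
                  mrgx p U (resx2 Finset.subset_union_right x) * (mrgx p (T ∪ U) x)⁻¹)
                = mrgx p T (resx2 Finset.subset_union_left x) *
                  mrgx p U (resx2 Finset.subset_union_right x) *
                    (mrgx p (T ∪ U) x * (mrgx p (T ∪ U) x)⁻¹) from by ring,
              mul_inv_cancel₀ h, mul_one]
      _ = 1 := by rw [mrgx_prod_sum p hd, hsum, one_mul]
  -- termwise log bound
  have hterm : ∀ y, p y * (Real.log (mT y) + Real.log (mU y) - Real.log (mW y))
      ≤ p y * (mT y * mU y * (mW y)⁻¹) - p y := by
    intro y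
    rcases eq_or_lt_of_le (hp y) with h | h
    · simp [← h]
    · have hmT' : 0 < mT y := lt_of_lt_of_le h (le_marg p hp T y)
      have hmU' : 0 < mU y := lt_of_lt_of_le h (le_marg p hp U y)
      have hmW' : 0 < mW y := lt_of_lt_of_le h (le_marg p hp (T ∪ U) y)
      have hpos : 0 < mT y * mU y * (mW y)⁻¹ := by positivity
      have hlog := Real.log_le_sub_one_of_pos hpos
      rw [Real.log_mul (by positivity) (by positivity), Real.log_mul (ne_of_gt hmT') (ne_of_gt hmU'),
        Real.log_inv] at hlog
      have := mul_le_mul_of_nonneg_left hlog (le_of_lt h)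
      calc p y * (Real.log (mT y) + Real.log (mU y) - Real.log (mW y))
          = p y * (Real.log (mT y) + Real.log (mU y) + -Real.log (mW y)) := by ring
        _ ≤ p y * (mT y * mU y * (mW y)⁻¹ - 1) := this
        _ = p y * (mT y * mU y * (mW y)⁻¹) - p y := by ring
  have hkey : ∑ y, p y * Real.log (mT y) + ∑ y, p y * Real.log (mU y)
      - ∑ y, p y * Real.log (mW y) ≤ 0 := by
    have h1 : ∑ y, p y * (Real.log (mT y) + Real.log (mU y) - Real.log (mW y))
        ≤ ∑ y, (p y * (mT y * mU y * (mW y)⁻¹) - p y) :=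
      Finset.sum_le_sum fun y _ => hterm y
    rw [Finset.sum_sub_distrib, hsum] at h1
    have h2 : ∑ y, p y * (Real.log (mT y) + Real.log (mU y) - Real.log (mW y))
        = ∑ y, p y * Real.log (mT y) + ∑ y, p y * Real.log (mU y)
          - ∑ y, p y * Real.log (mW y) := by
      simp only [mul_add, mul_sub]
      rw [Finset.sum_sub_distrib, Finset.sum_add_distrib]
    linarith [hprod]
  -- convert to logb
  have hconv : ∀ W : Finset (Fin n), ∑ y, p y * Real.logb 2 (marg p W y)
      = (∑ y, p y * Real.log (marg p W y)) / Real.log 2 := by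
    intro W
    rw [Finset.sum_div]
    exact Finset.sum_congr rfl fun y _ => by rw [Real.logb, mul_div_assoc]
  rw [margEnt_eq, margEnt_eq, margEnt_eq, hconv, hconv, hconv]
  rw [← neg_div, ← neg_div, ← neg_div, ← add_div]
  exact (div_le_div_iff_of_pos_right hL).mpr (by linarith [hkey])

end aux

/-- For three binary random variables, the 3-mutual information satisfies
`I₃ ≥ -min(H(X₁), H(X₂), H(X₃)) ≥ -1` (entropies in bits). -/
theorem I3_ge_neg_min_entropy_ge_neg_one (p : (∀ _ : Fin 3, Fin 2) → ℝ)
    (hp : ∀ x, 0 ≤ p x) (hsum : ∑ x, p x = 1) :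
    -min (margEnt 2 p {0}) (min (margEnt 2 p {1}) (margEnt 2 p {2}))
        ≤ Imul 2 p Finset.univ ∧
    (-1 : ℝ) ≤ -min (margEnt 2 p {0}) (min (margEnt 2 p {1}) (margEnt 2 p {2})) := by
  have hset : (Finset.univ : Finset (Fin 3)).powerset.erase ∅ =
      {{0}, {1}, {2}, {0, 1}, {0, 2}, {1, 2}, {0, 1, 2}} := by decide
  have hImul : Imul 2 p Finset.univ =
      margEnt 2 p {0} + margEnt 2 p {1} + margEnt 2 p {2}
      - margEnt 2 p {0, 1} - margEnt 2 p {0, 2} - margEnt 2 p {1, 2}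
      + margEnt 2 p {0, 1, 2} := by
    rw [Imul, hset]
    rw [Finset.sum_insert (by decide), Finset.sum_insert (by decide),
      Finset.sum_insert (by decide), Finset.sum_insert (by decide),
      Finset.sum_insert (by decide), Finset.sum_insert (by decide),
      Finset.sum_singleton]
    norm_num [show ({0} : Finset (Fin 3)).card = 1 from by decide,
      show ({1} : Finset (Fin 3)).card = 1 from by decide,
      show ({2} : Finset (Fin 3)).card = 1 from by decide,
      show ({0, 1} : Finset (Fin 3)).card = 2 from by decide,
      show ({0, 2} : Finset (Fin 3)).card = 2 from by decide,
      show ({1, 2} : Finset (Fin 3)).card = 2 from by decide,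
      show ({0, 1, 2} : Finset (Fin 3)).card = 3 from by decide]
    ring
  have h01 : margEnt 2 p {0, 1} ≤ margEnt 2 p {0} + margEnt 2 p {1} := by
    have := margEnt_union_le p hp hsum (show Disjoint ({0} : Finset (Fin 3)) {1} by decide)
    rwa [show ({0} : Finset (Fin 3)) ∪ {1} = {0, 1} from by decide] at this
  have h02 : margEnt 2 p {0, 2} ≤ margEnt 2 p {0} + margEnt 2 p {2} := by
    have := margEnt_union_le p hp hsum (show Disjoint ({0} : Finset (Fin 3)) {2} by decide)
    rwa [show ({0} : Finset (Fin 3)) ∪ {2} = {0, 2} from by decide] at this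
  have h12 : margEnt 2 p {1, 2} ≤ margEnt 2 p {1} + margEnt 2 p {2} := by
    have := margEnt_union_le p hp hsum (show Disjoint ({1} : Finset (Fin 3)) {2} by decide)
    rwa [show ({1} : Finset (Fin 3)) ∪ {2} = {1, 2} from by decide] at this
  have hm01 : margEnt 2 p {0, 1} ≤ margEnt 2 p {0, 1, 2} :=
    margEnt_mono p hp (by decide)
  have hm02 : margEnt 2 p {0, 2} ≤ margEnt 2 p {0, 1, 2} :=
    margEnt_mono p hp (by decide)
  have hm12 : margEnt 2 p {1, 2} ≤ margEnt 2 p {0, 1, 2} :=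
    margEnt_mono p hp (by decide)
  have hs0 : margEnt 2 p {0} ≤ 1 := by
    have := margEnt_le_logb_card p hp hsum ({0} : Finset (Fin 3))
    have hc : Fintype.card (∀ i : ({0} : Finset (Fin 3)), Fin 2) = 2 := by
      simp [Fintype.card_pi]
    rw [hc] at this
    simpa [Real.logb_self_eq_one (by norm_num : (1:ℝ) < 2)] using this
  constructor
  · rw [hImul]
    rcases le_total (margEnt 2 p {0}) (min (margEnt 2 p {1}) (margEnt 2 p {2})) with h | h
    · rw [min_eq_left h]
      linarith
    · rw [min_eq_right h]
      rcases le_total (margEnt 2 p {1}) (margEnt 2 p {2}) with h' | h'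
      · rw [min_eq_left h']; linarith
      · rw [min_eq_right h']; linarith
  · have : min (margEnt 2 p {0}) (min (margEnt 2 p {1}) (margEnt 2 p {2})) ≤ 1 :=
      le_trans (min_le_left _ _) hs0
    linarith
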